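/- Let (Ω, 𝔉, P) be a probability space, X a measurable space, and (f_x)_{x∈X} a centered Gaussian process on Ω with covariance function k(x, x′) = E[f_x·f_{x′}], such that each f_x ∈ L²(Ω, P) and x ↦ f_x ∈ L²(Ω, P) is strongly measurable. Let Z be an index set and (ν_z)_{z∈Z} a family of finite measures on X such that for each z the map x ↦ f_x is Bochner integrable in L²(Ω, P) with respect to ν_z, and set g_z = ∫ f_x dν_z(x) (Bochner integral in L²(Ω, P)). Then the combined process indexed by the disjoint union X ⊔ Z, equal to f_x on X and g_z on Z, is a centered Gaussian process, and its cross-covariance satisfies E[f_x·g_z] = ∫ k(x, x′) dν_z(x′) for all x ∈ X and z ∈ Z. -/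

import Mathlib

open MeasureTheory ProbabilityTheory

/-- A process `(f_t)_{t ∈ T}` on a measure space `(Ω, P)` is a centered Gaussian process
if every finite real linear combination `∑ i, c i * f (t i)` is a centered real Gaussian
random variable. -/
def IsCenteredGaussianProcess {Ω T : Type*} [MeasurableSpace Ω]
    (P : Measure Ω) (f : T → Ω → ℝ) : Prop :=
  ∀ (n : ℕ) (t : Fin n → T) (c : Fin n → ℝ), ∃ v : NNReal,
    P.map (fun ω => ∑ i, c i * f (t i) ω) = gaussianReal 0 v



open Filter Real Topology BoundedContinuousFunction
open scoped NNReal ENNReal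

lemma integral_sq_mul_exp : ∫ x : ℝ, x ^ 2 * rexp (-x ^ 2 / 2) = Real.sqrt (2 * π) := by
  have hb : (0:ℝ) < 1/2 := by norm_num
  have hu : ∀ x : ℝ, HasDerivAt (fun y : ℝ => y) 1 x := fun x => hasDerivAt_id x
  have hv : ∀ x : ℝ, HasDerivAt (fun y : ℝ => -rexp (-y ^ 2 / 2)) (x * rexp (-x ^ 2 / 2)) x := by
    intro x
    have h1 : HasDerivAt (fun y : ℝ => -y ^ 2 / 2) (-x) x := by
      have := ((hasDerivAt_pow 2 x).neg).div_const 2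
      exact this.congr_deriv (by push_cast; ring)
    have h2 := (h1.exp).neg
    exact h2.congr_deriv (by ring)
  have huv' : Integrable ((fun y : ℝ => y) * (fun x : ℝ => x * rexp (-x ^ 2 / 2))) := by
    have := integrable_rpow_mul_exp_neg_mul_sq hb (s := 2) (by norm_num)
    refine this.congr (Filter.Eventually.of_forall fun x => ?_)
    simp only [Pi.mul_apply]
    rw [Real.rpow_two, show -(1/2 : ℝ)*x^2 = -x^2/2 by ring]
    ring
  have hu'v : Integrable ((fun _ : ℝ => (1:ℝ)) * (fun y : ℝ => -rexp (-y ^ 2 / 2))) := by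
    have := (integrable_exp_neg_mul_sq hb).neg
    refine this.congr (Filter.Eventually.of_forall fun x => ?_)
    simp only [Pi.mul_apply, Pi.neg_apply, one_mul]
    rw [show -(1/2 : ℝ)*x^2 = -x^2/2 by ring]
  have huv : Integrable ((fun y : ℝ => y) * (fun y : ℝ => -rexp (-y ^ 2 / 2))) := by
    have := (integrable_mul_exp_neg_mul_sq hb).neg
    refine this.congr (Filter.Eventually.of_forall fun x => ?_)
    simp only [Pi.mul_apply, Pi.neg_apply]
    rw [show -(1/2 : ℝ)*x^2 = -x^2/2 by ring]
    ring
  have H := integral_mul_deriv_eq_deriv_mul_of_integrable (fun x _ => hu x) (fun x _ => hv x) huv' hu'v huv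
  have h2 : ∫ x : ℝ, x * (x * rexp (-x ^ 2 / 2)) = ∫ x : ℝ, x ^ 2 * rexp (-x ^ 2 / 2) := by
    congr 1; ext x; ring
  have h3 : (- ∫ x : ℝ, (1:ℝ) * -rexp (-x ^ 2 / 2)) = ∫ x : ℝ, rexp (-(1/2) * x ^ 2) := by
    rw [← integral_neg]
    congr 1; ext x
    rw [show -(1/2 : ℝ)*x^2 = -x^2/2 by ring]
    ring
  rw [h2] at H
  rw [H, h3, integral_gaussian]
  rw [show (2:ℝ)*π = π/(1/2) by ring]

lemma integral_sq_gaussianReal_one : ∫ x, x ^ 2 ∂(gaussianReal 0 1) = 1 := by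
  rw [gaussianReal_of_var_ne_zero 0 one_ne_zero]
  have hpdf : (gaussianPDF 0 1) = fun x => ((Real.toNNReal (gaussianPDFReal 0 1 x) : ℝ≥0) : ℝ≥0∞) := by
    rfl
  rw [hpdf, integral_withDensity_eq_integral_smul
    ((measurable_gaussianPDFReal 0 1).real_toNNReal) (fun x => x ^ 2)]
  have : ∀ x : ℝ, ((gaussianPDFReal 0 1 x).toNNReal • x ^ 2 : ℝ)
      = (Real.sqrt (2 * π))⁻¹ * (x ^ 2 * rexp (-x ^ 2 / 2)) := by
    intro x
    rw [NNReal.smul_def, smul_eq_mul, Real.coe_toNNReal _ (gaussianPDFReal_nonneg 0 1 x)]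
    unfold gaussianPDFReal
    push_cast
    rw [mul_one, mul_one]
    ring_nf
  simp_rw [this]
  rw [integral_const_mul, integral_sq_mul_exp]
  rw [inv_mul_cancel₀]
  positivity

lemma gaussianReal_eq_map (v : ℝ≥0) :
    gaussianReal 0 v = (gaussianReal 0 1).map (fun x => Real.sqrt v * x) := by
  have h := gaussianReal_map_const_mul (μ := 0) (v := 1) (Real.sqrt v)
  rw [show ((Real.sqrt v * ·) : ℝ → ℝ) = fun x => Real.sqrt v * x from rfl] at h
  rw [h]
  rw [mul_zero]
  congr 1
  ext
  simp [Real.sq_sqrt v.2]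

lemma integral_sq_gaussianReal (v : ℝ≥0) : ∫ x, x ^ 2 ∂(gaussianReal 0 v) = v := by
  rw [gaussianReal_eq_map v,
    integral_map (by fun_prop) (by fun_prop : AEStronglyMeasurable (fun x : ℝ => x ^ 2) _)]
  simp_rw [mul_pow]
  rw [integral_const_mul, integral_sq_gaussianReal_one, mul_one]
  exact Real.sq_sqrt v.2

lemma exists_gaussian_map_of_tendsto {Ω : Type*} [MeasurableSpace Ω] (P : Measure Ω)
    [IsProbabilityMeasure P] (u : ℕ → Lp ℝ 2 P) (Y : Lp ℝ 2 P)
    (hu : Filter.Tendsto u atTop (nhds Y))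
    (hG : ∀ n, ∃ v : ℝ≥0, P.map ⇑(u n) = gaussianReal 0 v) :
    ∃ v : ℝ≥0, P.map ⇑Y = gaussianReal 0 v := by
  choose v hv using hG
  -- second moment of an Lp element equals norm squared
  have hsq : ∀ W : Lp ℝ 2 P, ∫ ω, (W ω) ^ 2 ∂P = ‖W‖ ^ 2 := by
    intro W
    have h1 : (inner ℝ W W : ℝ) = ∫ ω, (W ω) * (W ω) ∂P := by
      rw [MeasureTheory.L2.inner_def]
      congr 1
    rw [← real_inner_self_eq_norm_sq, h1]
    congr 1; ext ω; ring
  have hveq : ∀ n, (v n : ℝ) = ‖u n‖ ^ 2 := by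
    intro n
    have h1 : ∫ x, x ^ 2 ∂(P.map ⇑(u n)) = (v n : ℝ) := by
      rw [hv n]; exact integral_sq_gaussianReal _
    rw [integral_map (Lp.aestronglyMeasurable (u n)).aemeasurable
      (by fun_prop : AEStronglyMeasurable (fun x : ℝ => x ^ 2) _)] at h1
    rw [← h1, hsq]
  set V : ℝ≥0 := ‖Y‖₊ ^ 2 with hV
  have hVcoe : (V : ℝ) = ‖Y‖ ^ 2 := by
    simp [hV, coe_nnnorm]
  have hvV : Filter.Tendsto (fun n => v n) atTop (nhds V) := by
    rw [← NNReal.tendsto_coe]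
    simp_rw [hveq, hVcoe]
    exact (hu.norm.pow 2)
  -- convergence in measure and a.e. subsequence
  have hmeas : TendstoInMeasure P (fun n => ⇑(u n)) atTop ⇑Y := by
    refine tendstoInMeasure_of_tendsto_eLpNorm (p := 2) (by norm_num)
      (fun n => Lp.aestronglyMeasurable _) (Lp.aestronglyMeasurable _) ?_
    have heq : ∀ n, eLpNorm (⇑(u n) - ⇑Y) 2 P = ENNReal.ofReal ‖u n - Y‖ := by
      intro n
      rw [← eLpNorm_congr_ae (Lp.coeFn_sub (u n) Y), Lp.norm_def,
        ENNReal.ofReal_toReal (Lp.eLpNorm_ne_top _)]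
    simp_rw [heq]
    have : Filter.Tendsto (fun n => ‖u n - Y‖) atTop (nhds 0) := by
      rw [← tendsto_iff_norm_sub_tendsto_zero]
      exact hu
    simpa using ENNReal.tendsto_ofReal this
  obtain ⟨ns, hns_mono, hae⟩ := hmeas.exists_seq_tendsto_ae
  haveI : IsProbabilityMeasure (P.map ⇑Y) :=
    Measure.isProbabilityMeasure_map (Lp.aestronglyMeasurable Y).aemeasurable
  refine ⟨V, ?_⟩
  apply ext_of_forall_lintegral_eq_of_IsFiniteMeasure
  intro φ
  set ψ : ℝ → ℝ := fun x => ((φ x : ℝ≥0) : ℝ) with hψ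
  have hψcont : Continuous ψ := NNReal.continuous_coe.comp φ.continuous
  obtain ⟨C, hC⟩ := φ.bounded
  set B : ℝ := ψ 0 + C with hB
  have hψbdd : ∀ x, ‖ψ x‖ ≤ B := by
    intro x
    rw [Real.norm_eq_abs, abs_of_nonneg (NNReal.coe_nonneg _)]
    have h1 : ψ x - ψ 0 ≤ dist (φ x) (φ 0) := by
      rw [NNReal.dist_eq]
      exact le_abs_self _
    have := hC x 0
    simp only [hB]
    linarith
  have hint : ∀ (μ : Measure ℝ), IsFiniteMeasure μ → Integrable ψ μ := by
    intro μ hμ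
    exact Integrable.mono' (integrable_const B) hψcont.aestronglyMeasurable
      (Filter.Eventually.of_forall hψbdd)
  -- the key identity
  have key : ∫ ω, ψ (Y ω) ∂P = ∫ x, ψ x ∂(gaussianReal 0 V) := by
    have h1 : Filter.Tendsto (fun k => ∫ ω, ψ (u (ns k) ω) ∂P) atTop
        (nhds (∫ ω, ψ (Y ω) ∂P)) := by
      refine tendsto_integral_of_dominated_convergence (fun _ => B)
        (fun k => hψcont.comp_aestronglyMeasurable (Lp.aestronglyMeasurable _))
        (integrable_const B)
        (fun k => Filter.Eventually.of_forall fun ω => hψbdd _) ?_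
      filter_upwards [hae] with ω hω
      exact (hψcont.tendsto _).comp hω
    have h2 : ∀ m, ∫ ω, ψ (u m ω) ∂P = ∫ x, ψ x ∂(gaussianReal 0 (v m)) := by
      intro m
      rw [← hv m, integral_map (Lp.aestronglyMeasurable (u m)).aemeasurable
        hψcont.aestronglyMeasurable]
    have hrep : ∀ w : ℝ≥0, ∫ x, ψ x ∂(gaussianReal 0 w)
        = ∫ x, ψ (Real.sqrt w * x) ∂(gaussianReal 0 1) := by
      intro w
      rw [gaussianReal_eq_map w, integral_map (by fun_prop) hψcont.aestronglyMeasurable]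
    have hsqrtv : Filter.Tendsto (fun k => Real.sqrt (v (ns k))) atTop
        (nhds (Real.sqrt V)) := by
      have h0 : Filter.Tendsto (fun k => v (ns k)) atTop (nhds V) :=
        hvV.comp hns_mono.tendsto_atTop
      exact (Real.continuous_sqrt.tendsto _).comp ((NNReal.tendsto_coe.mpr h0))
    have h3 : Filter.Tendsto (fun k => ∫ x, ψ x ∂(gaussianReal 0 (v (ns k)))) atTop
        (nhds (∫ x, ψ x ∂(gaussianReal 0 V))) := by
      simp_rw [hrep]
      refine tendsto_integral_of_dominated_convergence (fun _ => B)
        (fun k => (hψcont.comp (continuous_const.mul continuous_id)).aestronglyMeasurable)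
        (integrable_const B)
        (fun k => Filter.Eventually.of_forall fun x => hψbdd _) ?_
      refine Filter.Eventually.of_forall fun x => ?_
      exact (hψcont.tendsto _).comp (hsqrtv.mul_const x)
    have h4 : Filter.Tendsto (fun k => ∫ ω, ψ (u (ns k) ω) ∂P) atTop
        (nhds (∫ x, ψ x ∂(gaussianReal 0 V))) := by
      simp_rw [h2]; exact h3
    exact tendsto_nhds_unique h1 h4
  calc ∫⁻ x, (φ x : ℝ≥0∞) ∂(P.map ⇑Y)
      = ENNReal.ofReal (∫ x, ψ x ∂(P.map ⇑Y)) :=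
        lintegral_coe_eq_integral _ (hint _ inferInstance)
    _ = ENNReal.ofReal (∫ ω, ψ (Y ω) ∂P) := by
        rw [integral_map (Lp.aestronglyMeasurable Y).aemeasurable hψcont.aestronglyMeasurable]
    _ = ENNReal.ofReal (∫ x, ψ x ∂(gaussianReal 0 V)) := by rw [key]
    _ = ∫⁻ x, (φ x : ℝ≥0∞) ∂(gaussianReal 0 V) :=
        (lintegral_coe_eq_integral _ (hint _ inferInstance)).symm

lemma Lp_coeFn_finset_sum {α E ι : Type*} [MeasurableSpace α] {μ : Measure α}
    [NormedAddCommGroup E] {p : ℝ≥0∞} (s : Finset ι) (F : ι → Lp E p μ) :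
    ⇑(∑ i ∈ s, F i) =ᵐ[μ] fun ω => ∑ i ∈ s, F i ω := by
  classical
  induction s using Finset.induction_on with
  | empty => simp only [Finset.sum_empty]; exact Lp.coeFn_zero E p μ
  | insert _ _ hnot ih =>
    rename_i a s
    rw [Finset.sum_insert hnot]
    filter_upwards [Lp.coeFn_add (F a) (∑ i ∈ s, F i), ih] with ω h1 h2
    rw [h1, Finset.sum_insert hnot]
    simp only [Pi.add_apply, h2]

lemma Lp_coeFn_lincomb {Ω : Type*} [MeasurableSpace Ω] {P : Measure Ω} {n : ℕ}
    (c : Fin n → ℝ) (F : Fin n → Lp ℝ 2 P) :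
    ⇑(∑ i, c i • F i) =ᵐ[P] fun ω => ∑ i, c i * F i ω := by
  have h1 := Lp_coeFn_finset_sum (Finset.univ) (fun i => c i • F i)
  have h2 : ∀ i : Fin n, ⇑(c i • F i) =ᵐ[P] fun ω => c i * F i ω := fun i =>
    (Lp.coeFn_smul (c i) (F i)).mono fun ω h => by simp [h]
  filter_upwards [h1, eventually_all.mpr h2] with ω hω h2ω
  rw [hω]
  exact Finset.sum_congr rfl fun i _ => h2ω i

set_option synthInstance.maxHeartbeats 1000000 in
lemma exists_gaussian_map_of_mem_closure {Ω X : Type*} [MeasurableSpace Ω] (P : Measure Ω)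
    [IsProbabilityMeasure P] (f : X → Lp ℝ 2 P)
    (hGP : IsCenteredGaussianProcess P (fun x => ⇑(f x))) (y : Lp ℝ 2 P)
    (hy : y ∈ closure ((Submodule.span ℝ (Set.range f) : Submodule ℝ (Lp ℝ 2 P)) : Set (Lp ℝ 2 P))) :
    ∃ v : ℝ≥0, P.map ⇑y = gaussianReal 0 v := by
  have hspan : ∀ w : Lp ℝ 2 P, w ∈ Submodule.span ℝ (Set.range f) →
      ∃ v : ℝ≥0, P.map ⇑w = gaussianReal 0 v := by
    intro w hw
    obtain ⟨n, c, w', hw'⟩ := Submodule.mem_span_set'.mp hw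
    choose t ht using fun i => (w' i).2
    obtain ⟨v, hv⟩ := hGP n t c
    refine ⟨v, ?_⟩
    rw [← hv]
    apply Measure.map_congr
    have hsum := Lp_coeFn_lincomb c (fun i => ((w' i : Lp ℝ 2 P)))
    rw [hw'] at hsum
    refine hsum.trans (Filter.Eventually.of_forall fun ω => ?_)
    exact Finset.sum_congr rfl fun i _ => by rw [← ht i]
  haveI : FrechetUrysohnSpace (Lp ℝ 2 P) :=
    FirstCountableTopology.frechetUrysohnSpace
  obtain ⟨seq, hseqmem, hseqlim⟩ := mem_closure_iff_seq_limit.mp hy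
  exact exists_gaussian_map_of_tendsto P seq y hseqlim fun n => hspan _ (hseqmem n)

lemma integral_mem_closure_span {E X : Type*} [NormedAddCommGroup E] [InnerProductSpace ℝ E]
    [CompleteSpace E] [MeasurableSpace X] (ν : Measure X) (f : X → E)
    (hint : Integrable f ν) :
    ∫ x, f x ∂ν ∈ closure ((Submodule.span ℝ (Set.range f) : Submodule ℝ E) : Set E) := by
  set S := (Submodule.span ℝ (Set.range f)).topologicalClosure with hS
  haveI : CompleteSpace S :=
    @IsClosed.completeSpace_coe _ _ _ _ (Submodule.isClosed_topologicalClosure _)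
  set Q : E →L[ℝ] E := S.subtypeL.comp (S.orthogonalProjection) with hQdef
  have hQmem : ∀ y : E, Q y ∈ S := fun y => SetLike.coe_mem _
  have hQid : ∀ y ∈ S, Q y = y := by
    intro y hy
    show ((S.orthogonalProjection y : S) : E) = y
    exact congrArg Subtype.val (Submodule.orthogonalProjection_mem_subspace_eq_self (K := S) ⟨y, hy⟩)
  have h1 : Q (∫ x, f x ∂ν) = ∫ x, Q (f x) ∂ν := (Q.integral_comp_comm hint).symm
  have h2 : ∀ x, Q (f x) = f x := fun x =>
    hQid _ ((Submodule.span ℝ (Set.range f)).le_topologicalClosure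
      (Submodule.subset_span ⟨x, rfl⟩))
  simp_rw [h2] at h1
  have : (∫ x, f x ∂ν) ∈ S := h1 ▸ hQmem _
  rwa [hS, ← Submodule.topologicalClosure_coe] at *

/-- Joint Gaussianity of a centered Gaussian process and its conditional mean process
(the GPIV joint model). -/
theorem joint_gaussian_f_and_conditional_mean_process_IV
    {Ω : Type*} [MeasurableSpace Ω] (P : Measure Ω) [IsProbabilityMeasure P]
    {X : Type*} [MeasurableSpace X] {Z : Type*}
    (f : X → Lp ℝ 2 P) (hmeas : StronglyMeasurable f)
    (hGP : IsCenteredGaussianProcess P (fun x => ⇑(f x)))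
    (k : X → X → ℝ) (hk : ∀ x x', k x x' = ∫ ω, f x ω * f x' ω ∂P)
    (ν : Z → Measure X) (hfin : ∀ z, IsFiniteMeasure (ν z))
    (hint : ∀ z, Integrable f (ν z))
    (g : Z → Lp ℝ 2 P) (hg : ∀ z, g z = ∫ x, f x ∂(ν z)) :
    IsCenteredGaussianProcess P (Sum.elim (fun x => ⇑(f x)) (fun z => ⇑(g z))) ∧
    ∀ x z, (∫ ω, f x ω * g z ω ∂P) = ∫ x', k x x' ∂(ν z) := by
  constructor
  · intro n t c
    set F : X ⊕ Z → Lp ℝ 2 P := Sum.elim f g with hF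
    set S : Submodule ℝ (Lp ℝ 2 P) := Submodule.span ℝ (Set.range f) with hSdef
    have hFmem : ∀ s : X ⊕ Z, F s ∈ closure (S : Set (Lp ℝ 2 P)) := by
      rintro (x | z)
      · exact subset_closure (Submodule.subset_span ⟨x, rfl⟩)
      · show g z ∈ _
        rw [hg z]
        haveI := hfin z
        have h := integral_mem_closure_span (ν z) f (hint z)
        exact h
    have hymem : (∑ i, c i • F (t i)) ∈ closure (S : Set (Lp ℝ 2 P)) := by
      rw [← Submodule.topologicalClosure_coe]
      refine Submodule.sum_mem _ fun i _ => Submodule.smul_mem _ _ ?_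
      rw [← SetLike.mem_coe, Submodule.topologicalClosure_coe]
      exact hFmem (t i)
    obtain ⟨v, hv⟩ := exists_gaussian_map_of_mem_closure P f hGP _ hymem
    refine ⟨v, ?_⟩
    rw [← hv]
    apply Measure.map_congr
    have helim : ∀ s : X ⊕ Z,
        Sum.elim (fun x => ⇑(f x)) (fun z => ⇑(g z)) s = ⇑(F s) := by
      rintro (x | z) <;> rfl
    have hsum := Lp_coeFn_lincomb c (fun i => F (t i))
    have hpt : (fun ω => ∑ i, c i * Sum.elim (fun x => ⇑(f x)) (fun z => ⇑(g z)) (t i) ω)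
        = fun ω => ∑ i, c i * (F (t i)) ω := by
      funext ω
      exact Finset.sum_congr rfl fun i _ => by rw [helim (t i)]
    rw [hpt]
    exact hsum.symm
  · intro x z
    haveI := hfin z
    have h1 : (inner ℝ (f x) (g z) : ℝ) = ∫ ω, f x ω * g z ω ∂P := by
      rw [MeasureTheory.L2.inner_def]
      congr 1
      ext ω; simp [mul_comm]
    have h2 : (inner ℝ (f x) (g z) : ℝ) = ∫ x', (inner ℝ (f x) (f x') : ℝ) ∂(ν z) := by
      rw [hg z, ← integral_inner (hint z) (f x)]
    rw [← h1, h2]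
    refine integral_congr_ae (Filter.Eventually.of_forall fun x' => ?_)
    show (inner ℝ (f x) (f x') : ℝ) = k x x'
    rw [hk x x', MeasureTheory.L2.inner_def]
    congr 1
    ext ω; simp [mul_comm]
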